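/- arXiv:2007.11177 — 3 statements merged into one kernel-verified Lean document; each statement's English description precedes it below -/
import Mathlib

section
/- Let A be an abelian group, Φ: Γ(A) → A/2A the homomorphism with Φ(γ(a)) = a mod 2A, and Θ: A ⊗_ℤ A → Γ(A) the homomorphism with Θ(a ⊗ b) = γ(a+b) - γ(a) - γ(b). Then the sequence A ⊗_ℤ A → Γ(A) → A/2A → 0 is exact: Φ is surjective and ker(Φ) = im(Θ). -/
open FreeAbelianGroup

/-- The relations defining Whitehead's quadratic functor: `w a = w (-a)` and
`w (a+b+c) - w (a+b) - w (a+c) - w (b+c) + w a + w b + w c = 0`. -/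
def gammaRelations (A : Type) [AddCommGroup A] : AddSubgroup (FreeAbelianGroup A) :=
  AddSubgroup.closure
    ({x | ∃ a : A, x = of a - of (-a)} ∪
     {x | ∃ a b c : A,
        x = of (a + b + c) - of (a + b) - of (a + c) - of (b + c) + of a + of b + of c})

/-- Whitehead's quadratic functor `Γ(A)`: the free abelian group on symbols `w a`, `a ∈ A`,
modulo the relations `w a = w (-a)` and
`w (a+b+c) - w (a+b) - w (a+c) - w (b+c) + w a + w b + w c = 0`. -/
def Gamma (A : Type) [AddCommGroup A] : Type :=
  FreeAbelianGroup A ⧸ gammaRelations A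

instance (A : Type) [AddCommGroup A] : AddCommGroup (Gamma A) :=
  QuotientAddGroup.Quotient.addCommGroup _

/-- The universal quadratic map `γ : A → Γ(A)`. -/
def gam {A : Type} [AddCommGroup A] (a : A) : Gamma A :=
  QuotientAddGroup.mk (of a)

/-- The subgroup `2A` of `A`. -/
def twoSubgroup (A : Type) [AddCommGroup A] : AddSubgroup A :=
  (AddMonoidHom.mk' (fun a : A => 2 • a) (by intro a b; simp [smul_add])).range

lemma gam_neg {A : Type} [AddCommGroup A] (a : A) : gam (-a) = gam a := by
  apply (QuotientAddGroup.eq_iff_sub_mem).mpr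
  have h : of a - of (-a) ∈ gammaRelations A :=
    AddSubgroup.subset_closure (Or.inl ⟨a, rfl⟩)
  have h2 := (gammaRelations A).neg_mem h
  rwa [neg_sub] at h2

open TensorProduct in
/-- If `Φ : Γ(A) → A/2A` satisfies `Φ (γ a) = a mod 2A` and `Θ : A ⊗ A → Γ(A)`
satisfies `Θ (a ⊗ b) = γ(a+b) - γ a - γ b`, then `A ⊗ A → Γ(A) → A/2A → 0` is exact:
`Φ` is surjective and `ker Φ = im Θ`. -/
theorem stmt7 (A : Type) [AddCommGroup A]
    (Φ : Gamma A →+ A ⧸ twoSubgroup A)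
    (hΦ : ∀ a : A, Φ (gam a) = QuotientAddGroup.mk a)
    (Θ : TensorProduct ℤ A A →+ Gamma A)
    (hΘ : ∀ a b : A, Θ (a ⊗ₜ[ℤ] b) = gam (a + b) - gam a - gam b) :
    Function.Surjective Φ ∧ Φ.ker = Θ.range := by
  constructor
  · intro q
    obtain ⟨a, rfl⟩ := QuotientAddGroup.mk_surjective q
    exact ⟨gam a, hΦ a⟩
  · -- define f : A →+ Gamma A ⧸ Θ.range
    set N := Θ.range with hN
    have fadd : ∀ a b : A, (QuotientAddGroup.mk (gam (a + b)) : Gamma A ⧸ N) =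
        QuotientAddGroup.mk (gam a) + QuotientAddGroup.mk (gam b) := by
      intro a b
      rw [← QuotientAddGroup.mk_add]
      apply (QuotientAddGroup.eq_iff_sub_mem).mpr
      refine ⟨a ⊗ₜ[ℤ] b, ?_⟩
      rw [hΘ]; abel
    set f : A →+ Gamma A ⧸ N :=
      AddMonoidHom.mk' (fun a => QuotientAddGroup.mk (gam a)) fadd with hf
    have fneg : ∀ a : A, f a = - f a := by
      intro a
      have h1 : f (-a) = f a := by simp only [hf, AddMonoidHom.mk'_apply, gam_neg]
      conv_lhs => rw [← h1]
      exact map_neg f a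
    have hker : ∀ a ∈ twoSubgroup A, f a = 0 := by
      rintro _ ⟨b, rfl⟩
      show f (2 • b) = 0
      rw [two_smul, map_add]
      nth_rewrite 1 [fneg b]
      abel
    set g : (A ⧸ twoSubgroup A) →+ Gamma A ⧸ N :=
      QuotientAddGroup.lift _ f hker with hg
    have key : ∀ x : Gamma A, g (Φ x) = QuotientAddGroup.mk x := by
      intro x
      obtain ⟨y, rfl⟩ := QuotientAddGroup.mk_surjective x
      induction y using FreeAbelianGroup.induction_on with
      | zero => rw [QuotientAddGroup.mk_zero]; show g (Φ (0 : Gamma A)) = QuotientAddGroup.mk (0 : Gamma A); rw [map_zero, map_zero, QuotientAddGroup.mk_zero]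
      | of a =>
        have : (QuotientAddGroup.mk (of a) : Gamma A) = gam a := rfl
        rw [this, hΦ a]
        exact QuotientAddGroup.lift_mk _ hker a
      | neg a ih => rw [QuotientAddGroup.mk_neg]; exact (congrArg g (map_neg Φ (gam a))).trans ((map_neg g _).trans (congrArg Neg.neg ih))
      | add y z ihy ihz => rw [QuotientAddGroup.mk_add]; exact (congrArg g (map_add Φ (QuotientAddGroup.mk y : Gamma A) (QuotientAddGroup.mk z))).trans ((map_add g _ _).trans (congrArg₂ (· + ·) ihy ihz))
    ext x
    constructor
    · intro hx
      have hx0 : Φ x = 0 := hx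
      have := key x
      rw [hx0, map_zero] at this
      exact (QuotientAddGroup.eq_zero_iff x).mp this.symm
    · rintro ⟨t, rfl⟩
      show Φ (Θ t) = 0
      induction t using TensorProduct.induction_on with
      | zero => simp
      | tmul a b =>
        rw [hΘ, map_sub, map_sub, hΦ, hΦ, hΦ, QuotientAddGroup.mk_add]
        abel
      | add s t ihs iht => rw [map_add, map_add, ihs, iht, add_zero]
end

section
/- Let A be an abelian group and Θ: A ⊗_ℤ A → Γ(A) the homomorphism with Θ(a ⊗ b) = γ(a+b) - γ(a) - γ(b). Then ker(Θ) is the subgroup of A ⊗_ℤ A generated by the elements a ⊗ b - b ⊗ a, a, b ∈ A. Consequently Θ induces an injection (A ⊗_ℤ A)/⟨a⊗b - b⊗a⟩ ↪ Γ(A). -/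
open FreeAbelianGroup

/-! ### Auxiliary constructions for the proof of Statement 8 -/

namespace Stmt8Aux

noncomputable section

open TensorProduct

variable (A : Type) [AddCommGroup A]

/-- The subgroup of `A ⊗ A` generated by the commutators `a ⊗ b - b ⊗ a`. -/
def CommSub : AddSubgroup (TensorProduct ℤ A A) :=
  AddSubgroup.closure {x | ∃ a b : A, x = a ⊗ₜ[ℤ] b - b ⊗ₜ[ℤ] a}

/-- The symmetric square `(A ⊗ A)/⟨a⊗b - b⊗a⟩`. -/
def Qg : Type := TensorProduct ℤ A A ⧸ CommSub A

instance : AddCommGroup (Qg A) := QuotientAddGroup.Quotient.addCommGroup _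

/-- The quotient map `A ⊗ A → Qg A`. -/
def pi : TensorProduct ℤ A A →+ Qg A := QuotientAddGroup.mk' (CommSub A)

variable {A}

/-- The symmetric product in `Qg A`. -/
def mu (a b : A) : Qg A := pi A (a ⊗ₜ[ℤ] b)

lemma mu_comm (a b : A) : mu a b = mu b a := by
  show QuotientAddGroup.mk _ = QuotientAddGroup.mk _
  rw [QuotientAddGroup.eq]
  have : -(a ⊗ₜ[ℤ] b) + b ⊗ₜ[ℤ] a = -(a ⊗ₜ[ℤ] b - b ⊗ₜ[ℤ] a) := by abel
  rw [this]
  exact neg_mem (AddSubgroup.subset_closure ⟨a, b, rfl⟩)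

lemma mu_add_left (a a' b : A) : mu (a + a') b = mu a b + mu a' b := by
  rw [mu, mu, mu, add_tmul, map_add]

lemma mu_add_right (a b b' : A) : mu a (b + b') = mu a b + mu a b' := by
  rw [mu, mu, mu, tmul_add, map_add]

lemma mu_zero_left (b : A) : mu 0 b = 0 := by
  rw [mu, zero_tmul, map_zero]

lemma mu_zero_right (a : A) : mu a 0 = 0 := by
  rw [mu, tmul_zero, map_zero]

lemma mu_neg_left (a b : A) : mu (-a) b = -mu a b := by
  rw [mu, mu, neg_tmul, map_neg]

lemma mu_neg_right (a b : A) : mu a (-b) = -mu a b := by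
  rw [mu, mu, tmul_neg, map_neg]

/-- The central extension `Qg A ×_β A` with cocycle `β(x,y) = μ(x,y)`. -/
structure Mg (A : Type) [AddCommGroup A] : Type where
  q : Qg A
  x : A

instance : Add (Mg A) := ⟨fun u v => ⟨u.q + v.q + mu u.x v.x, u.x + v.x⟩⟩
instance : Zero (Mg A) := ⟨⟨0, 0⟩⟩
instance : Neg (Mg A) := ⟨fun u => ⟨-u.q + mu u.x u.x, -u.x⟩⟩

lemma add_def (u v : Mg A) : u + v = ⟨u.q + v.q + mu u.x v.x, u.x + v.x⟩ := rfl
lemma zero_def : (0 : Mg A) = ⟨0, 0⟩ := rfl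
lemma neg_def (u : Mg A) : -u = ⟨-u.q + mu u.x u.x, -u.x⟩ := rfl

instance : AddCommGroup (Mg A) where
  add_assoc u v w := by
    simp only [add_def, Mg.mk.injEq, mu_add_left, mu_add_right]
    exact ⟨by abel, by abel⟩
  zero_add u := by
    obtain ⟨q, x⟩ := u
    simp only [add_def, zero_def, mu_zero_left, Mg.mk.injEq]
    exact ⟨by abel, by abel⟩
  add_zero u := by
    obtain ⟨q, x⟩ := u
    simp only [add_def, zero_def, mu_zero_right, Mg.mk.injEq]
    exact ⟨by abel, by abel⟩
  nsmul := nsmulRec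
  zsmul := zsmulRec
  neg_add_cancel u := by
    simp only [add_def, neg_def, zero_def, mu_neg_left, Mg.mk.injEq]
    exact ⟨by abel, by abel⟩
  add_comm u v := by
    simp only [add_def, Mg.mk.injEq, mu_comm u.x v.x]
    exact ⟨by abel, by abel⟩

/-- The quadratic section `A → Mg A`. -/
def eMg (a : A) : Mg A := ⟨0, a⟩

/-- The homomorphism `t ↦ (2 t², 2t)` whose range is the subgroup `D`. -/
def dl : A →+ Mg A :=
  AddMonoidHom.mk' (fun a => ⟨mu a a + mu a a, a + a⟩) (by
    intro a b
    simp only [add_def, Mg.mk.injEq, mu_add_left, mu_add_right]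
    refine ⟨?_, by abel⟩
    simp only [mu_comm b a]
    abel)

lemma dl_apply (a : A) : dl a = ⟨mu a a + mu a a, a + a⟩ := rfl

variable (A)

/-- The subgroup `D = {(2t², 2t) : t ∈ A}` of `Mg A`. -/
def Dsub : AddSubgroup (Mg A) := (dl (A := A)).range

/-- The inclusion `Qg A → Mg A`, `s ↦ (s, 0)`. -/
def jQ : Qg A →+ Mg A :=
  AddMonoidHom.mk' (fun s => ⟨s, 0⟩) (by
    intro s t
    simp only [add_def, Mg.mk.injEq, mu_zero_left]
    exact ⟨by abel, by abel⟩)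

variable {A}

lemma eMg_sub_neg (a : A) : eMg a - eMg (-a) = dl a := by
  simp only [sub_eq_add_neg, eMg, neg_def, add_def, dl_apply, mu_neg_left, mu_neg_right,
    neg_neg, neg_zero, Mg.mk.injEq, neg_neg]
  exact ⟨by abel, trivial⟩

lemma rel2_eq (a b c : A) :
    eMg (a + b + c) + eMg a + eMg b + eMg c = eMg (a + b) + eMg (a + c) + eMg (b + c) := by
  simp only [eMg, add_def, Mg.mk.injEq, mu_add_left, mu_add_right, zero_add, add_zero]
  refine ⟨?_, by abel⟩
  simp only [mu_comm b a, mu_comm c a, mu_comm c b]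
  abel

lemma key_e (a b : A) : eMg (a + b) - eMg a - eMg b = (⟨-(mu a b), 0⟩ : Mg A) := by
  simp only [sub_eq_add_neg, eMg, neg_def, add_def, mu_neg_left, mu_neg_right, neg_zero,
    mu_add_left, mu_add_right, Mg.mk.injEq]
  refine ⟨?_, by abel⟩
  simp only [mu_comm b a]
  abel

variable (A)

/-- The lift of `a ↦ (0,a)` to the free abelian group, composed with the projection
to `Mg A ⧸ D`. -/
def fM : FreeAbelianGroup A →+ Mg A ⧸ Dsub A :=
  (QuotientAddGroup.mk' (Dsub A)).comp (FreeAbelianGroup.lift (eMg (A := A)))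

lemma rel_le_ker : gammaRelations A ≤ (fM A).ker := by
  rw [gammaRelations, AddSubgroup.closure_le]
  rintro x (⟨a, rfl⟩ | ⟨a, b, c, rfl⟩) <;>
    simp only [SetLike.mem_coe, AddMonoidHom.mem_ker, fM, AddMonoidHom.coe_comp,
      Function.comp_apply]
  · have h : (FreeAbelianGroup.lift (eMg (A := A))) (of a - of (-a)) = dl a := by
      rw [map_sub, FreeAbelianGroup.lift_apply_of, FreeAbelianGroup.lift_apply_of, eMg_sub_neg]
    rw [h]
    exact (QuotientAddGroup.eq_zero_iff (dl a)).mpr ⟨a, rfl⟩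
  · have h : (FreeAbelianGroup.lift (eMg (A := A)))
        (of (a + b + c) - of (a + b) - of (a + c) - of (b + c) + of a + of b + of c) = 0 := by
      simp only [map_sub, map_add, FreeAbelianGroup.lift_apply_of]
      have h2 : eMg (a + b + c) - eMg (a + b) - eMg (a + c) - eMg (b + c) + eMg a + eMg b
          + eMg c
          = (eMg (a + b + c) + eMg a + eMg b + eMg c)
            - (eMg (a + b) + eMg (a + c) + eMg (b + c)) := by abel
      rw [h2, rel2_eq, sub_self]
    rw [h, map_zero]

/-- The homomorphism `Γ(A) → Mg A ⧸ D` with `γ(a) ↦ (0, a)`. -/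
def phiG : Gamma A →+ Mg A ⧸ Dsub A :=
  QuotientAddGroup.lift (gammaRelations A) (fM A) (rel_le_ker A)

lemma phiG_gam (a : A) : phiG A (gam a) = QuotientAddGroup.mk (eMg a) := by
  show fM A (of a) = _
  simp only [fM, AddMonoidHom.coe_comp, Function.comp_apply, FreeAbelianGroup.lift_apply_of,
    QuotientAddGroup.mk'_apply]

end

end Stmt8Aux

open TensorProduct in
/-- If `Θ : A ⊗ A → Γ(A)` satisfies `Θ (a ⊗ b) = γ(a+b) - γ a - γ b`, then
`ker Θ` is the subgroup generated by the elements `a ⊗ b - b ⊗ a`; consequently `Θ` induces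
an injection of `(A ⊗ A)/⟨a ⊗ b - b ⊗ a⟩` into `Γ(A)`. -/
theorem stmt8 (A : Type) [AddCommGroup A]
    (Θ : TensorProduct ℤ A A →+ Gamma A)
    (hΘ : ∀ a b : A, Θ (a ⊗ₜ[ℤ] b) = gam (a + b) - gam a - gam b) :
    Θ.ker = AddSubgroup.closure {x | ∃ a b : A, x = a ⊗ₜ[ℤ] b - b ⊗ₜ[ℤ] a} ∧
    ∀ x y : TensorProduct ℤ A A, Θ x = Θ y →
      x - y ∈ AddSubgroup.closure {x | ∃ a b : A, x = a ⊗ₜ[ℤ] b - b ⊗ₜ[ℤ] a} := by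
  open Stmt8Aux in
  -- The easy inclusion: commutators are in the kernel.
  have hCker : CommSub A ≤ Θ.ker := by
    rw [CommSub, AddSubgroup.closure_le]
    rintro x ⟨a, b, rfl⟩
    simp only [SetLike.mem_coe, AddMonoidHom.mem_ker, map_sub, hΘ, add_comm b a]
    abel
  -- The key computation: `φ (Θ z) = [(-π z, 0)]` in `Mg A ⧸ D`.
  have key : ∀ z : TensorProduct ℤ A A,
      phiG A (Θ z) = QuotientAddGroup.mk (⟨-(pi A z), 0⟩ : Mg A) := by
    have hext : ((phiG A).comp Θ).toIntLinearMap
        = ((QuotientAddGroup.mk' (Dsub A)).comp ((jQ A).comp (-(pi A)))).toIntLinearMap := by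
      apply TensorProduct.ext'
      intro a b
      show (phiG A) (Θ (a ⊗ₜ[ℤ] b)) = (QuotientAddGroup.mk' (Dsub A)) ((jQ A) ((-(pi A)) (a ⊗ₜ[ℤ] b)))
      rw [hΘ a b, map_sub, map_sub, phiG_gam, phiG_gam, phiG_gam,
        ← QuotientAddGroup.mk_sub, ← QuotientAddGroup.mk_sub, key_e]
      rfl
    intro z
    have := DFunLike.congr_fun hext z
    exact this
  -- The hard inclusion.
  have hkerC : ∀ x ∈ Θ.ker, x ∈ CommSub A := by
    intro x hx
    rw [AddMonoidHom.mem_ker] at hx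
    have h1 := key x
    rw [hx, map_zero] at h1
    have h2 : (⟨-(pi A x), 0⟩ : Mg A) ∈ Dsub A := by
      rwa [eq_comm, QuotientAddGroup.eq_zero_iff] at h1
    obtain ⟨t, ht⟩ := h2
    rw [dl_apply, Mg.mk.injEq] at ht
    obtain ⟨ht1, ht2⟩ := ht
    have h3 : mu t t + mu t t = 0 := by
      rw [← mu_add_left, ht2, mu_zero_left]
    have h4 : pi A x = 0 := by
      have := ht1.symm.trans h3
      rwa [neg_eq_zero] at this
    exact (QuotientAddGroup.eq_zero_iff x).mp h4
  have hker : Θ.ker = CommSub A := le_antisymm hkerC hCker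
  constructor
  · exact hker
  · intro x y h
    have : x - y ∈ Θ.ker := by
      rw [AddMonoidHom.mem_ker, map_sub, h, sub_self]
    exact hkerC _ this
end

section
/- For any abelian group A, the sequence 0 → A/2A → (A ⊗_ℤ A)/⟨a⊗b + b⊗a⟩ → A ∧ A → 0 is exact, where the first map sends a mod 2A to the class of a ⊗ a and the second is the natural quotient map. -/
open TensorProduct

/-- The subgroup of `A ⊗ A` generated by the elements `a ⊗ b + b ⊗ a`. -/
noncomputable def symSubgroup (A : Type) [AddCommGroup A] : AddSubgroup (TensorProduct ℤ A A) :=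
  AddSubgroup.closure {x | ∃ a b : A, x = a ⊗ₜ[ℤ] b + b ⊗ₜ[ℤ] a}

/-- The subgroup of `A ⊗ A` generated by the elements `a ⊗ a`. -/
noncomputable def diagSubgroup (A : Type) [AddCommGroup A] : AddSubgroup (TensorProduct ℤ A A) :=
  AddSubgroup.closure {x | ∃ a : A, x = a ⊗ₜ[ℤ] a}

section aux
variable (A : Type) [AddCommGroup A]

lemma self_add_self_mem (a : A) : a ⊗ₜ[ℤ] a + a ⊗ₜ[ℤ] a ∈ symSubgroup A :=
  AddSubgroup.subset_closure ⟨a, a, rfl⟩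

lemma cross_mem (a b : A) : a ⊗ₜ[ℤ] b + b ⊗ₜ[ℤ] a ∈ symSubgroup A :=
  AddSubgroup.subset_closure ⟨a, b, rfl⟩

lemma key_inj {a : A} (h : a ⊗ₜ[ℤ] a ∈ symSubgroup A) : a ∈ twoSubgroup A := by
  by_contra hne
  -- pass to V = A / 2A, an 𝔽₂-vector space
  set V := A ⧸ twoSubgroup A
  have h2 : ∀ x : V, 2 • x = 0 := by
    intro x
    induction x using QuotientAddGroup.induction_on with
    | H b =>
      rw [← QuotientAddGroup.mk_nsmul, QuotientAddGroup.eq_zero_iff]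
      exact ⟨b, rfl⟩
  letI : Module (ZMod 2) V := AddCommGroup.zmodModule h2
  have hv : (QuotientAddGroup.mk a : V) ≠ 0 := by
    rwa [Ne, QuotientAddGroup.eq_zero_iff]
  obtain ⟨l, hl⟩ : ∃ l : Module.Dual (ZMod 2) V, l (QuotientAddGroup.mk a) ≠ 0 := by
    by_contra hc
    push_neg at hc
    exact hv ((Module.forall_dual_apply_eq_zero_iff (ZMod 2) _).mp hc)
  -- L : A →+ ZMod 2
  set L : A →+ ZMod 2 := l.toAddMonoidHom.comp (QuotientAddGroup.mk' (twoSubgroup A)) with hL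
  have hLa : L a ≠ 0 := hl
  -- bilinear map (x,y) ↦ L x * L y
  let B : A →ₗ[ℤ] A →ₗ[ℤ] ZMod 2 := LinearMap.mk₂ ℤ (fun x y => L x * L y)
    (fun x₁ x₂ y => by rw [map_add, add_mul])
    (fun c x y => by rw [map_zsmul, smul_mul_assoc])
    (fun x y₁ y₂ => by rw [map_add, mul_add])
    (fun c x y => by rw [map_zsmul, mul_smul_comm])
  let φ : TensorProduct ℤ A A →ₗ[ℤ] ZMod 2 := TensorProduct.lift B
  have hsym : symSubgroup A ≤ φ.toAddMonoidHom.ker := by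
    rw [symSubgroup, AddSubgroup.closure_le]
    rintro x ⟨u, w, rfl⟩
    show φ (u ⊗ₜ[ℤ] w + w ⊗ₜ[ℤ] u) = 0
    rw [map_add]
    have : φ (u ⊗ₜ[ℤ] w) = L u * L w := rfl
    have h2' : φ (w ⊗ₜ[ℤ] u) = L w * L u := rfl
    rw [this, h2', mul_comm (L w), ← two_mul, show (2 : ZMod 2) = 0 by decide, zero_mul]
  have := hsym h
  rw [AddMonoidHom.mem_ker] at this
  have : φ (a ⊗ₜ[ℤ] a) = L a * L a := rfl
  have hx : L a * L a = 0 := by rw [← this]; exact hsym h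
  rcases mul_eq_zero.mp hx with h' | h' <;> exact hLa h'

lemma sym_le_diag : symSubgroup A ≤ diagSubgroup A := by
  rw [symSubgroup, AddSubgroup.closure_le]
  rintro x ⟨u, w, rfl⟩
  have key : u ⊗ₜ[ℤ] w + w ⊗ₜ[ℤ] u
      = (u + w) ⊗ₜ[ℤ] (u + w) - u ⊗ₜ[ℤ] u - w ⊗ₜ[ℤ] w := by
    simp [TensorProduct.add_tmul, TensorProduct.tmul_add]
    abel
  rw [SetLike.mem_coe, key]
  exact sub_mem (sub_mem (AddSubgroup.subset_closure ⟨u + w, rfl⟩)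
    (AddSubgroup.subset_closure ⟨u, rfl⟩)) (AddSubgroup.subset_closure ⟨w, rfl⟩)

lemma diag_iff (t : TensorProduct ℤ A A) :
    t ∈ diagSubgroup A ↔ ∃ a : A, t - a ⊗ₜ[ℤ] a ∈ symSubgroup A := by
  constructor
  · intro ht
    induction ht using AddSubgroup.closure_induction with
    | mem x hx => obtain ⟨a, rfl⟩ := hx; exact ⟨a, by rw [sub_self]; exact zero_mem _⟩
    | zero => exact ⟨0, by simpa using zero_mem (symSubgroup A)⟩
    | add x y hx hy ihx ihy =>
      obtain ⟨a, ha⟩ := ihx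
      obtain ⟨b, hb⟩ := ihy
      refine ⟨a + b, ?_⟩
      have key : x + y - (a + b) ⊗ₜ[ℤ] (a + b)
          = (x - a ⊗ₜ[ℤ] a) + (y - b ⊗ₜ[ℤ] b) - (a ⊗ₜ[ℤ] b + b ⊗ₜ[ℤ] a) := by
        simp [TensorProduct.add_tmul, TensorProduct.tmul_add]
        abel
      rw [key]
      exact sub_mem (add_mem ha hb) (cross_mem A a b)
    | neg x hx ihx =>
      obtain ⟨a, ha⟩ := ihx
      refine ⟨a, ?_⟩
      have key : -x - a ⊗ₜ[ℤ] a = -(x - a ⊗ₜ[ℤ] a) - (a ⊗ₜ[ℤ] a + a ⊗ₜ[ℤ] a) := by abel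
      rw [key]
      exact sub_mem (neg_mem ha) (self_add_self_mem A a)
  · rintro ⟨a, ha⟩
    have : t = (t - a ⊗ₜ[ℤ] a) + a ⊗ₜ[ℤ] a := by abel
    rw [this]
    exact add_mem (sym_le_diag A ha) (AddSubgroup.subset_closure ⟨a, rfl⟩)

end aux

/-- For any abelian group `A`, the sequence
`0 → A/2A → (A ⊗ A)/⟨a⊗b + b⊗a⟩ → A ∧ A → 0` is exact, where the first map sends
`a mod 2A` to the class of `a ⊗ a` and the second is the natural quotient map. -/
theorem stmt10 (A : Type) [AddCommGroup A]
    (f : A ⧸ twoSubgroup A →+ TensorProduct ℤ A A ⧸ symSubgroup A)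
    (hf : ∀ a : A, f (QuotientAddGroup.mk a) = QuotientAddGroup.mk (a ⊗ₜ[ℤ] a))
    (g : TensorProduct ℤ A A ⧸ symSubgroup A →+ TensorProduct ℤ A A ⧸ diagSubgroup A)
    (hg : ∀ x : TensorProduct ℤ A A,
      g (QuotientAddGroup.mk x) = QuotientAddGroup.mk x) :
    Function.Injective f ∧ Function.Surjective g ∧ f.range = g.ker := by
  refine ⟨?_, ?_, ?_⟩
  · rw [injective_iff_map_eq_zero]
    intro y hy
    induction y using QuotientAddGroup.induction_on with
    | H a =>
      rw [hf a, QuotientAddGroup.eq_zero_iff] at hy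
      rw [QuotientAddGroup.eq_zero_iff]
      exact key_inj A hy
  · intro z
    induction z using QuotientAddGroup.induction_on with
    | H t => exact ⟨QuotientAddGroup.mk t, hg t⟩
  · ext z
    induction z using QuotientAddGroup.induction_on with
    | H t =>
      rw [AddMonoidHom.mem_ker, hg t, QuotientAddGroup.eq_zero_iff, diag_iff]
      constructor
      · rintro ⟨y, hy⟩
        revert hy
        induction y using QuotientAddGroup.induction_on with
        | H a =>
          intro hy
          rw [hf a, QuotientAddGroup.eq] at hy
          exact ⟨a, by simpa [neg_add_eq_sub] using hy⟩
      · rintro ⟨a, ha⟩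
        refine ⟨QuotientAddGroup.mk a, ?_⟩
        rw [hf a, QuotientAddGroup.eq]
        simpa [neg_add_eq_sub] using ha
end
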